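/- arXiv:2112.11489 — 3 statements merged into one kernel-verified Lean document; each statement's English description precedes it below -/
import Mathlib

section
/- The non-orthogonal projection Q: L²(∂Ω) → L²(∂Ω) defined by Q(f) = ∑_{m=1}^M (1/H^{N-1}(e_m)) (∫_{ẽ_m} f) χ_{e_m} satisfies ‖Q‖_{L(L²(∂Ω))} ≤ θ^{1/2}, where θ = max_m H^{N-1}(ẽ_m)/H^{N-1}(e_m). Moreover Q maps mean-zero functions to mean-zero functions in PC, and Q is the identity on PC_*. -/
open MeasureTheory

/-- The function `Φ(I) = ∑_m (I_m / H^{N-1}(e_m)) χ_{e_m}`. -/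
noncomputable def elecFun {X : Type*} [MeasurableSpace X] (ν : Measure X) {M : ℕ}
    (e : Fin M → Set X) (I : Fin M → ℝ) : X → ℝ :=
  fun x => ∑ m, Set.indicator (e m) (fun _ => I m / (ν (e m)).toReal) x

/-- The non-orthogonal projection
`Q(f) = ∑_m (1/H^{N-1}(e_m)) (∫_{ẽ_m} f) χ_{e_m}`. -/
noncomputable def Qfun {X : Type*} [MeasurableSpace X] (ν : Measure X) {M : ℕ}
    (e et : Fin M → Set X) (f : X → ℝ) : X → ℝ :=
  fun x => ∑ m, Set.indicator (e m)
    (fun _ => (∫ y in et m, f y ∂ν) / (ν (e m)).toReal) x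

section Aux

variable {X : Type*} [MeasurableSpace X]

lemma sum_indicator_sq_aux {M : ℕ} (e : Fin M → Set X)
    (hdisj : Pairwise (Function.onFun Disjoint e)) (a : Fin M → ℝ) (x : X) :
    (∑ m, Set.indicator (e m) (fun _ => a m) x) ^ 2
      = ∑ m, Set.indicator (e m) (fun _ => a m ^ 2) x := by
  by_cases h : ∃ m, x ∈ e m
  · obtain ⟨m, hm⟩ := h
    have hnot : ∀ k, k ≠ m → x ∉ e k := fun k hk hxk =>
      (hdisj hk).le_bot (Set.mem_inter hxk hm)
    rw [Finset.sum_eq_single m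
        (fun b _ hb => Set.indicator_of_notMem (hnot b hb) _)
        (fun hm' => absurd (Finset.mem_univ m) hm'),
      Finset.sum_eq_single m
        (fun b _ hb => Set.indicator_of_notMem (hnot b hb) _)
        (fun hm' => absurd (Finset.mem_univ m) hm')]
    simp [Set.indicator_of_mem hm]
  · push_neg at h
    simp [Set.indicator_of_notMem (h _)]

lemma sq_setIntegral_le {ν : Measure X} [IsFiniteMeasure ν] (s : Set X)
    {f : X → ℝ} (hf : MemLp f 2 ν) :
    (∫ x in s, f x ∂ν) ^ 2 ≤ (ν s).toReal * ∫ x in s, f x ^ 2 ∂ν := by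
  have hpow : ∀ y : ℝ, y ^ (2 : ℝ) = y ^ 2 := fun y => by
    rw [show (2 : ℝ) = ((2 : ℕ) : ℝ) by norm_num, Real.rpow_natCast]
  have hconj : Real.HolderConjugate 2 2 := Real.HolderConjugate.two_two
  have hf2 : MemLp (fun x => |f x|) (ENNReal.ofReal 2) (ν.restrict s) := by
    simpa [Real.norm_eq_abs, ENNReal.ofReal_ofNat] using (hf.restrict s).norm
  have hg2 : MemLp (fun _ : X => (1 : ℝ)) (ENNReal.ofReal 2) (ν.restrict s) := by
    simpa [ENNReal.ofReal_ofNat] using (memLp_const (1 : ℝ) : MemLp _ 2 (ν.restrict s))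
  have hH := integral_mul_le_Lp_mul_Lq_of_nonneg hconj
    (Filter.Eventually.of_forall fun x => abs_nonneg (f x))
    (Filter.Eventually.of_forall fun _ => zero_le_one) hf2 hg2
  simp only [mul_one, hpow, one_pow, sq_abs] at hH
  have hconst : ∫ _ in s, (1 : ℝ) ∂ν = (ν s).toReal := by
    simp [Measure.restrict_apply_univ, measureReal_def]
  rw [hconst] at hH
  have habs : |∫ x in s, f x ∂ν| ≤ ∫ x in s, |f x| ∂ν := by
    simpa [Real.norm_eq_abs] using norm_integral_le_integral_norm (μ := ν.restrict s) f
  have hB : (0 : ℝ) ≤ ∫ x in s, f x ^ 2 ∂ν := integral_nonneg fun x => sq_nonneg _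
  have hνs : (0 : ℝ) ≤ (ν s).toReal := ENNReal.toReal_nonneg
  have hchain : |∫ x in s, f x ∂ν|
      ≤ (∫ x in s, f x ^ 2 ∂ν) ^ ((1 : ℝ)/2) * (ν s).toReal ^ ((1 : ℝ)/2) :=
    habs.trans hH
  have hsq : (∫ x in s, f x ∂ν) ^ 2
      ≤ ((∫ x in s, f x ^ 2 ∂ν) ^ ((1 : ℝ)/2) * (ν s).toReal ^ ((1 : ℝ)/2)) ^ 2 := by
    rw [← sq_abs (∫ x in s, f x ∂ν)]
    exact pow_le_pow_left₀ (abs_nonneg _) hchain 2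
  calc (∫ x in s, f x ∂ν) ^ 2
      ≤ ((∫ x in s, f x ^ 2 ∂ν) ^ ((1 : ℝ)/2) * (ν s).toReal ^ ((1 : ℝ)/2)) ^ 2 := hsq
    _ = (ν s).toReal * ∫ x in s, f x ^ 2 ∂ν := by
        rw [mul_pow, ← Real.sqrt_eq_rpow, ← Real.sqrt_eq_rpow, Real.sq_sqrt hB,
          Real.sq_sqrt hνs, mul_comm]

lemma toReal_eLpNorm_two {ν : Measure X} {g : X → ℝ} (hg : MemLp g 2 ν) :
    (eLpNorm g 2 ν).toReal = Real.sqrt (∫ x, g x ^ 2 ∂ν) := by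
  rw [hg.eLpNorm_eq_integral_rpow_norm two_ne_zero ENNReal.ofNat_ne_top]
  have h1 : ∀ x, ‖g x‖ ^ ((2 : ENNReal).toReal) = g x ^ 2 := fun x => by
    rw [ENNReal.toReal_ofNat, show (2 : ℝ) = ((2 : ℕ) : ℝ) by norm_num,
      Real.rpow_natCast, Real.norm_eq_abs, sq_abs]
  simp_rw [h1]
  rw [ENNReal.toReal_ofReal
    (Real.rpow_nonneg (integral_nonneg fun x => sq_nonneg _) _)]
  rw [show ((2 : ENNReal).toReal)⁻¹ = (1 : ℝ)/2 by rw [ENNReal.toReal_ofNat]; norm_num,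
    ← Real.sqrt_eq_rpow]

end Aux

/-- The non-orthogonal projection `Q : L²(∂Ω) → L²(∂Ω)` satisfies
`‖Q‖ ≤ θ^{1/2}` where `θ = max_m H^{N-1}(ẽ_m)/H^{N-1}(e_m)`; moreover `Q` maps
mean-zero functions to mean-zero functions (valued in `PC`), and `Q` is the
identity on `PC_*`. -/
theorem stmt_4 {X : Type*} [MeasurableSpace X] (ν : Measure X) [IsFiniteMeasure ν]
    (M : ℕ) (hM : 1 ≤ M)
    (e et : Fin M → Set X)
    (hmeas : ∀ m, MeasurableSet (e m)) (hmeas' : ∀ m, MeasurableSet (et m))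
    (hsub : ∀ m, e m ⊆ et m)
    (hdisj : Pairwise (Function.onFun Disjoint e))
    (hdisj' : Pairwise (Function.onFun Disjoint et))
    (hcover : ν (Set.univ \ ⋃ m, et m) = 0)
    (hpos : ∀ m, 0 < ν (e m))
    (θ : ℝ) (hθ : ∀ m, (ν (et m)).toReal ≤ θ * (ν (e m)).toReal) :
    (∀ f : X → ℝ, MemLp f 2 ν →
        (eLpNorm (Qfun ν e et f) 2 ν).toReal
          ≤ Real.sqrt θ * (eLpNorm f 2 ν).toReal) ∧
      (∀ f : X → ℝ, MemLp f 2 ν → ∫ x, f x ∂ν = 0 →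
        ∫ x, Qfun ν e et f x ∂ν = 0) ∧
      (∀ I : Fin M → ℝ, ∑ m, I m = 0 →
        Qfun ν e et (elecFun ν e I) = elecFun ν e I) := by
  have hep : ∀ m, (0 : ℝ) < (ν (e m)).toReal := fun m =>
    ENNReal.toReal_pos (hpos m).ne' (measure_ne_top ν _)
  have hθ0 : (0 : ℝ) ≤ θ := by
    have m0 : Fin M := ⟨0, hM⟩
    have h1 : (ν (e m0)).toReal ≤ (ν (et m0)).toReal :=
      ENNReal.toReal_mono (measure_ne_top ν _) (measure_mono (hsub m0))
    nlinarith [hθ m0, hep m0]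
  -- integral over the union of the ẽ_m
  have hUnion : ∀ g : X → ℝ, Integrable g ν →
      ∑ m, ∫ x in et m, g x ∂ν = ∫ x in ⋃ m, et m, g x ∂ν := by
    intro g hg
    rw [integral_iUnion hmeas' hdisj' hg.integrableOn]
    exact (tsum_fintype _).symm
  have hFull : ∀ g : X → ℝ, Integrable g ν →
      ∫ x in ⋃ m, et m, g x ∂ν = ∫ x, g x ∂ν := by
    intro g hg
    have hU : MeasurableSet (⋃ m, et m) := MeasurableSet.iUnion hmeas'
    have h0 : ν ((⋃ m, et m)ᶜ) = 0 := by
      rw [Set.compl_eq_univ_diff]; exact hcover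
    have h2 : ∫ x in (⋃ m, et m)ᶜ, g x ∂ν = 0 := by
      rw [Measure.restrict_eq_zero.mpr h0]; exact integral_zero_measure _
    have h3 := integral_add_compl hU hg
    linarith
  -- integral of a PC function
  have hPCint : ∀ c : Fin M → ℝ,
      ∫ x, (∑ m, Set.indicator (e m) (fun _ => c m) x) ∂ν
        = ∑ m, (ν (e m)).toReal * c m := by
    intro c
    rw [integral_finset_sum _ (fun m _ => (integrable_const (c m)).indicator (hmeas m))]
    exact Finset.sum_congr rfl fun m _ => by
      rw [integral_indicator_const _ (hmeas m), smul_eq_mul, measureReal_def]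
  refine ⟨?_, ?_, ?_⟩
  · -- norm bound
    intro f hf
    have hfsq := hf.integrable_sq
    have hQmem : MemLp (Qfun ν e et f) 2 ν :=
      memLp_finset_sum Finset.univ
        (fun m _ => (memLp_const _).indicator (hmeas m))
    set c : Fin M → ℝ := fun m => (∫ y in et m, f y ∂ν) / (ν (e m)).toReal with hc
    have hQ_eq : Qfun ν e et f = fun x => ∑ m, Set.indicator (e m) (fun _ => c m) x := rfl
    have hQsq : ∫ x, (Qfun ν e et f x) ^ 2 ∂ν = ∑ m, (ν (e m)).toReal * c m ^ 2 := by
      have hpt : ∀ x, (Qfun ν e et f x) ^ 2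
          = ∑ m, Set.indicator (e m) (fun _ => c m ^ 2) x := fun x =>
        sum_indicator_sq_aux e hdisj c x
      simp_rw [hpt]
      exact hPCint _
    have hterm : ∀ m, (ν (e m)).toReal * c m ^ 2 ≤ θ * ∫ x in et m, f x ^ 2 ∂ν := by
      intro m
      have ha := hep m
      have hcs := sq_setIntegral_le (et m) hf
      have hB : (0 : ℝ) ≤ ∫ x in et m, f x ^ 2 ∂ν := integral_nonneg fun x => sq_nonneg _
      have heq : (ν (e m)).toReal * c m ^ 2
          = (∫ y in et m, f y ∂ν) ^ 2 / (ν (e m)).toReal := by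
        rw [hc]; field_simp
      rw [heq, div_le_iff₀ ha]
      nlinarith [hθ m]
    have hle : ∫ x, (Qfun ν e et f x) ^ 2 ∂ν ≤ θ * ∫ x, f x ^ 2 ∂ν := by
      rw [hQsq]
      calc ∑ m, (ν (e m)).toReal * c m ^ 2
          ≤ ∑ m, θ * ∫ x in et m, f x ^ 2 ∂ν := Finset.sum_le_sum fun m _ => hterm m
        _ = θ * ∑ m, ∫ x in et m, f x ^ 2 ∂ν := by rw [Finset.mul_sum]
        _ = θ * ∫ x in ⋃ m, et m, f x ^ 2 ∂ν := by rw [hUnion _ hfsq]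
        _ ≤ θ * ∫ x, f x ^ 2 ∂ν := by
            refine mul_le_mul_of_nonneg_left ?_ hθ0
            exact setIntegral_le_integral hfsq
              (Filter.Eventually.of_forall fun x => sq_nonneg _)
    rw [toReal_eLpNorm_two hQmem, toReal_eLpNorm_two hf,
      ← Real.sqrt_mul hθ0]
    exact Real.sqrt_le_sqrt hle
  · -- mean zero preserved
    intro f hf hf0
    have hfint := hf.integrable one_le_two
    have h1 : ∫ x, Qfun ν e et f x ∂ν
        = ∑ m, (ν (e m)).toReal * ((∫ y in et m, f y ∂ν) / (ν (e m)).toReal) :=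
      hPCint _
    rw [h1]
    have h2 : ∀ m, (ν (e m)).toReal * ((∫ y in et m, f y ∂ν) / (ν (e m)).toReal)
        = ∫ y in et m, f y ∂ν := fun m => by
      rw [mul_comm]
      exact div_mul_cancel₀ _ (hep m).ne'
    simp_rw [h2]
    rw [hUnion _ hfint, hFull _ hfint, hf0]
  · -- identity on PC_*
    intro I _
    have hInt : ∀ m, ∫ y in et m, elecFun ν e I y ∂ν = I m := by
      intro m
      unfold elecFun
      rw [integral_finset_sum _
        (fun k _ => ((integrable_const _).indicator (hmeas k)).restrict)]
      have hterm : ∀ k, ∫ y in et m, Set.indicator (e k)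
          (fun _ => I k / (ν (e k)).toReal) y ∂ν
          = (ν (et m ∩ e k)).toReal * (I k / (ν (e k)).toReal) := fun k => by
        rw [setIntegral_indicator (hmeas k), setIntegral_const, smul_eq_mul, measureReal_def]
      rw [Finset.sum_eq_single m]
      · rw [hterm m, Set.inter_eq_right.mpr (hsub m), mul_comm,
          div_mul_cancel₀ _ (hep m).ne']
      · intro k _ hk
        rw [hterm k]
        have hd : et m ∩ e k = ∅ := by
          refine Set.disjoint_iff_inter_eq_empty.mp ?_
          exact (hdisj' hk.symm).mono_right (hsub k)
        rw [hd]
        simp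
      · intro hm'; exact absurd (Finset.mem_univ m) hm'
    funext x
    show ∑ m, Set.indicator (e m)
        (fun _ => (∫ y in et m, elecFun ν e I y ∂ν) / (ν (e m)).toReal) x
      = elecFun ν e I x
    simp_rw [hInt]
    rfl
end

section
/- Céa's Lemma: Let H be a Hilbert space, X a closed subspace, b a symmetric continuous coercive bilinear form with c₁‖u‖² ≤ b(u,u) and b(u,w) ≤ c₂‖u‖‖w‖. If u ∈ H solves b(u,w)=F[w] for all w ∈ H and u_X ∈ X solves b(u_X,w)=F[w] for all w ∈ X, then ‖u − u_X‖ ≤ √(c₂/c₁) · inf{‖u − v‖ : v ∈ X}. -/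
open scoped RealInnerProductSpace

/-- Céa's Lemma: Let `H` be a Hilbert space, `X` a closed subspace, `b` a symmetric
continuous coercive bilinear form with `c₁‖u‖² ≤ b(u,u)` and `b(u,w) ≤ c₂‖u‖‖w‖`.
If `u ∈ H` solves `b(u,w) = F[w]` for all `w ∈ H` and `uX ∈ X` solves
`b(uX,w) = F[w]` for all `w ∈ X`, then `‖u − uX‖ ≤ √(c₂/c₁) · inf {‖u − v‖ : v ∈ X}`. -/
theorem stmt_12 {H : Type*} [NormedAddCommGroup H] [InnerProductSpace ℝ H]
    [CompleteSpace H]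
    (X : Submodule ℝ H) (hX : IsClosed (X : Set H))
    (b : H →ₗ[ℝ] H →ₗ[ℝ] ℝ) (hsym : ∀ u w, b u w = b w u)
    (c1 c2 : ℝ) (hc1 : 0 < c1) (hc12 : c1 ≤ c2)
    (hcont : ∀ u w, b u w ≤ c2 * ‖u‖ * ‖w‖)
    (hcoer : ∀ u, c1 * ‖u‖ ^ 2 ≤ b u u)
    (F : H →L[ℝ] ℝ)
    (u uX : H) (huX : uX ∈ X)
    (hu : ∀ w, b u w = F w)
    (huXsol : ∀ w ∈ X, b uX w = F w) :
    ‖u - uX‖ ≤ Real.sqrt (c2 / c1) * ⨅ v : X, ‖u - (v : H)‖ := by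
  have hs : (0:ℝ) < Real.sqrt (c2 / c1) := by
    exact Real.sqrt_pos.mpr (div_pos (lt_of_lt_of_le hc1 hc12) hc1)
  -- Galerkin orthogonality
  have horth : ∀ w ∈ X, b (u - uX) w = 0 := by
    intro w hw
    simp [hu w, huXsol w hw]
  have key : ∀ v : X, ‖u - uX‖ ≤ Real.sqrt (c2 / c1) * ‖u - (v : H)‖ := by
    intro v
    set e := u - uX with he
    set d := uX - (v : H) with hd
    have hdX : d ∈ X := X.sub_mem huX v.2
    have hsplit : u - (v : H) = e + d := by rw [he, hd]; abel
    have hbd : (0:ℝ) ≤ b d d := le_trans (by positivity) (hcoer d)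
    have h1 : b e e ≤ b (u - (v : H)) (u - (v : H)) := by
      rw [hsplit]
      simp only [map_add, LinearMap.add_apply]
      rw [horth d hdX, hsym d e, horth d hdX]
      linarith
    have h2 : c1 * ‖e‖ ^ 2 ≤ c2 * ‖u - (v : H)‖ ^ 2 := by
      calc c1 * ‖e‖ ^ 2 ≤ b e e := hcoer e
        _ ≤ b (u - (v : H)) (u - (v : H)) := h1
        _ ≤ c2 * ‖u - (v : H)‖ * ‖u - (v : H)‖ := hcont _ _
        _ = c2 * ‖u - (v : H)‖ ^ 2 := by ring
    have h3 : ‖e‖ ^ 2 ≤ (c2 / c1) * ‖u - (v : H)‖ ^ 2 := by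
      rw [div_mul_eq_mul_div, le_div_iff₀ hc1]; linarith
    calc ‖e‖ = Real.sqrt (‖e‖ ^ 2) := by
          rw [Real.sqrt_sq (norm_nonneg _)]
      _ ≤ Real.sqrt ((c2 / c1) * ‖u - (v : H)‖ ^ 2) := Real.sqrt_le_sqrt h3
      _ = Real.sqrt (c2 / c1) * ‖u - (v : H)‖ := by
          rw [Real.sqrt_mul (div_pos (lt_of_lt_of_le hc1 hc12) hc1).le, Real.sqrt_sq (norm_nonneg _)]
  rw [← div_le_iff₀' hs]
  exact le_ciInf fun v => (div_le_iff₀' hs).mpr (key v)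
end

section
/- Fundamental theorem of Γ-convergence: let (X,d) be a metric space and F_n: X → [−∞,+∞] a sequence of equicoercive functions Γ-converging to F. Then F attains its minimum on X, min_X F = lim_n inf_X F_n, and if x_n → x with lim_n F_n(x_n) = lim_n inf_X F_n, then x is a minimum point of F. -/
open Filter

lemma myClusterPt (u : ℕ → EReal) : MapClusterPt (liminf u atTop) atTop u := by
  rw [mapClusterPt_iff_frequently]
  intro s hs
  set L := liminf u atTop with hL
  rcases eq_top_or_lt_top L with h | hlt
  · rw [h] at hs
    obtain ⟨a, ha⟩ := EReal.mem_nhds_top_iff.1 hs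
    have hla : (a : EReal) < L := by rw [h]; exact EReal.coe_lt_top a
    have hev : ∀ᶠ n in atTop, (a : EReal) < u n := eventually_lt_of_lt_liminf hla
    exact (hev.mono fun n hn => ha hn).frequently
  rcases eq_bot_or_bot_lt L with h | hbot
  · rw [h] at hs
    obtain ⟨a, ha⟩ := EReal.mem_nhds_bot_iff.1 hs
    have hla : L < (a : EReal) := by rw [h]; exact EReal.bot_lt_coe a
    have hfr : ∃ᶠ n in atTop, u n < (a : EReal) :=
      frequently_lt_of_liminf_lt (by isBoundedDefault) hla
    exact hfr.mono fun n hn => ha hn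
  · obtain ⟨l', u', hmem, hsub⟩ :=
      (mem_nhds_iff_exists_Ioo_subset' ⟨⊥, hbot⟩ ⟨⊤, hlt⟩).1 hs
    have h1 : ∀ᶠ n in atTop, l' < u n := eventually_lt_of_lt_liminf hmem.1
    have h2 : ∃ᶠ n in atTop, u n < u' :=
      frequently_lt_of_liminf_lt (by isBoundedDefault) hmem.2
    exact (h2.and_eventually h1).mono fun n hn => hsub ⟨hn.2, hn.1⟩

lemma myLiminfComp (u : ℕ → EReal) (ψ : ℕ → ℕ) (hψ : Tendsto ψ atTop atTop) :
    liminf u atTop ≤ liminf (u ∘ ψ) atTop := by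
  have h := liminf_le_liminf_of_le (u := u) (hψ : map ψ atTop ≤ atTop)
  rwa [Filter.liminf, Filter.liminf, Filter.map_map] at h

/-- Fundamental theorem of Γ-convergence: let `(X,d)` be a metric space and
`Fseq : ℕ → X → [−∞,+∞]` a sequence of equicoercive functions Γ-converging to `Flim`.
Then `Flim` attains its minimum on `X`, `min_X Flim = lim_n inf_X Fseq n`, and if
`xs n → x` with `lim_n Fseq n (xs n) = lim_n inf_X Fseq n`, then `x` is a minimum
point of `Flim`. -/
theorem stmt_19 {X : Type*} [MetricSpace X] [Nonempty X]
    (Fseq : ℕ → X → EReal) (Flim : X → EReal)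
    -- Γ-liminf inequality
    (hliminf : ∀ (x : X) (xs : ℕ → X), Tendsto xs atTop (nhds x) →
      Flim x ≤ liminf (fun n => Fseq n (xs n)) atTop)
    -- existence of recovery sequences
    (hrecov : ∀ x : X, ∃ xs : ℕ → X, Tendsto xs atTop (nhds x) ∧
      Tendsto (fun n => Fseq n (xs n)) atTop (nhds (Flim x)))
    -- equicoercivity
    (hequi : ∃ K : Set X, IsCompact K ∧ ∀ n, (⨅ x ∈ K, Fseq n x) = ⨅ x : X, Fseq n x) :
    (∃ xmin : X, ∀ y : X, Flim xmin ≤ Flim y) ∧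
    Tendsto (fun n => ⨅ x : X, Fseq n x) atTop (nhds (⨅ x : X, Flim x)) ∧
    (∀ (x : X) (xs : ℕ → X) (Lval : EReal),
      Tendsto xs atTop (nhds x) →
      Tendsto (fun n => Fseq n (xs n)) atTop (nhds Lval) →
      Tendsto (fun n => ⨅ y : X, Fseq n y) atTop (nhds Lval) →
      ∀ y : X, Flim x ≤ Flim y) := by
  classical
  obtain ⟨K, hKc, hKinf⟩ := hequi
  set m : ℕ → EReal := fun n => ⨅ x : X, Fseq n x with hmdef
  set M : EReal := ⨅ x : X, Flim x with hMdef
  have hup : limsup m atTop ≤ M := by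
    refine le_iInf fun y => ?_
    obtain ⟨xs, hxs, hFxs⟩ := hrecov y
    have h1 : limsup m atTop ≤ limsup (fun n => Fseq n (xs n)) atTop :=
      limsup_le_limsup (Eventually.of_forall fun n => iInf_le _ _)
    rwa [hFxs.limsup_eq] at h1
  rcases Set.eq_empty_or_nonempty K with hKe | hKne
  · -- degenerate case: K empty, all Fseq ≡ ⊤
    have htop : ∀ n (x : X), Fseq n x = ⊤ := by
      intro n x
      have h := hKinf n
      rw [hKe] at h
      simp only [Set.mem_empty_iff_false, iInf_false, iInf_top] at h
      have h2 := iInf_le (fun x => Fseq n x) x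
      rw [← h] at h2
      exact top_le_iff.1 h2
    have hFtop : ∀ x : X, Flim x = ⊤ := by
      intro x
      obtain ⟨xs, hxs, hFxs⟩ := hrecov x
      have h : Tendsto (fun _ : ℕ => (⊤ : EReal)) atTop (nhds (Flim x)) := by
        simpa [htop] using hFxs
      exact (tendsto_nhds_unique h tendsto_const_nhds)
    have hm_top : ∀ n, m n = ⊤ := fun n => by simp [hmdef, htop]
    have hM_top : M = ⊤ := by simp [hMdef, hFtop]
    refine ⟨⟨Classical.arbitrary X, fun y => by rw [hFtop, hFtop]⟩, ?_, ?_⟩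
    · have : m = fun _ => (⊤ : EReal) := funext hm_top
      rw [this, hM_top]
      exact tendsto_const_nhds
    · intro x xs Lval _ _ _ y
      rw [hFtop, hFtop]
  · -- main case
    obtain ⟨x0, hx0K⟩ := hKne
    set L := liminf m atTop with hLdef
    set b : ℕ → EReal := fun n =>
      max (m n) (((-(n : ℝ) : ℝ)) : EReal) + (((1 / ((n : ℝ) + 1) : ℝ)) : EReal) with hbdef
    have hchoice : ∀ n : ℕ, ∃ y, y ∈ K ∧ Fseq n y ≤ b n := by
      intro n
      rcases eq_top_or_lt_top (m n) with hmn | hmn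
      · refine ⟨x0, hx0K, ?_⟩
        have hb : b n = ⊤ := by
          rw [hbdef]
          simp only []
          rw [max_eq_left (hmn ▸ le_top : (((-(n : ℝ) : ℝ)) : EReal) ≤ m n), hmn]
          exact EReal.top_add_coe _
        rw [hb]; exact le_top
      · have hlt : m n < b n := by
          have hrtop : max (m n) (((-(n : ℝ) : ℝ)) : EReal) < ⊤ :=
            max_lt hmn (EReal.coe_lt_top _)
          have hrbot : (⊥ : EReal) < max (m n) (((-(n : ℝ) : ℝ)) : EReal) :=
            lt_of_lt_of_le (EReal.bot_lt_coe _) (le_max_right _ _)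
          set r := max (m n) (((-(n : ℝ) : ℝ)) : EReal) with hr
          have hre : ((r.toReal : ℝ) : EReal) = r := EReal.coe_toReal hrtop.ne hrbot.ne'
          calc m n ≤ r := le_max_left _ _
            _ < r + (((1 / ((n : ℝ) + 1) : ℝ)) : EReal) := by
                rw [← hre, ← EReal.coe_add, EReal.coe_lt_coe_iff]
                have : (0:ℝ) < 1 / ((n : ℝ) + 1) := by positivity
                linarith
            _ = b n := rfl
        have h2 : (⨅ y ∈ K, Fseq n y) < b n := by rw [hKinf n]; exact hlt
        obtain ⟨y, hy⟩ := iInf_lt_iff.1 h2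
        obtain ⟨hyK, hylt⟩ := iInf_lt_iff.1 hy
        exact ⟨y, hyK, hylt.le⟩
    choose y hyK hyle using hchoice
    obtain ⟨φ, hφmono, hφlim⟩ := TopologicalSpace.FirstCountableTopology.tendsto_subseq (myClusterPt m)
    obtain ⟨x, hxK, σ, hσmono, hσlim⟩ := hKc.tendsto_subseq (fun k => hyK (φ k))
    set ψ : ℕ → ℕ := φ ∘ σ with hψdef
    have hψmono : StrictMono ψ := hφmono.comp hσmono
    have hmψ : Tendsto (m ∘ ψ) atTop (nhds L) := hφlim.comp hσmono.tendsto_atTop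
    have hyψ : Tendsto (fun k => y (ψ k)) atTop (nhds x) := hσlim
    set xs : ℕ → X := fun n => if n ∈ Set.range ψ then y n else x with hxsdef
    have hxs_sub : ∀ k, xs (ψ k) = y (ψ k) := by
      intro k
      simp only [hxsdef]
      rw [if_pos ⟨k, rfl⟩]
    have hxs_tendsto : Tendsto xs atTop (nhds x) := by
      rw [Filter.tendsto_def]
      intro U hU
      obtain ⟨K0, hK0⟩ := (Filter.eventually_atTop).1 (hyψ.eventually_mem hU)
      refine mem_atTop_sets.2 ⟨ψ K0, fun n hn => ?_⟩
      by_cases h : n ∈ Set.range ψ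
      · obtain ⟨k, hk⟩ := h
        have hkK0 : K0 ≤ k := by
          rw [← hψmono.le_iff_le]
          rw [hk]; exact hn
        have : xs n = y n := by simp only [hxsdef]; rw [if_pos ⟨k, hk⟩]
        rw [Set.mem_preimage, this, ← hk]
        exact hK0 k hkK0
      · have : xs n = x := by simp only [hxsdef]; rw [if_neg h]
        rw [Set.mem_preimage, this]
        exact mem_of_mem_nhds hU
    have hFlimx_le : Flim x ≤ L := by
      rw [← EReal.le_of_forall_lt_iff_le]
      intro c hc
      obtain ⟨c', hc'1, hc'2⟩ := exists_between hc
      lift c' to ℝ using ⟨(hc'2.trans (EReal.coe_lt_top c)).ne, (bot_le.trans_lt hc'1).ne'⟩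
      have e1 : ∀ᶠ k in atTop, (m ∘ ψ) k < (c' : EReal) :=
        hmψ.eventually_lt_const hc'1
      obtain ⟨N, hN⟩ := exists_nat_ge (-c')
      have e2 : ∀ᶠ k in atTop, ((-(ψ k : ℝ) : ℝ) : EReal) ≤ (c' : EReal) := by
        filter_upwards [eventually_ge_atTop N] with k hk
        rw [EReal.coe_le_coe_iff]
        have h1 : (N : ℝ) ≤ (ψ k : ℝ) := by
          exact_mod_cast le_trans hk (hψmono.le_apply)
        linarith
      obtain ⟨N', hN'⟩ := exists_nat_one_div_lt (by
        rw [sub_pos]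
        exact_mod_cast EReal.coe_lt_coe_iff.1 hc'2 : (0:ℝ) < c - c')
      have e3 : ∀ᶠ k in atTop, (((1 / ((ψ k : ℝ) + 1) : ℝ)) : EReal) ≤ (((c - c' : ℝ)) : EReal) := by
        filter_upwards [eventually_ge_atTop N'] with k hk
        rw [EReal.coe_le_coe_iff]
        have h1 : (N' : ℝ) + 1 ≤ (ψ k : ℝ) + 1 := by
          have : (N' : ℝ) ≤ (ψ k : ℝ) := by exact_mod_cast le_trans hk (hψmono.le_apply)
          linarith
        have h2 : (0:ℝ) < (N' : ℝ) + 1 := by positivity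
        calc (1 : ℝ) / ((ψ k : ℝ) + 1) ≤ 1 / ((N' : ℝ) + 1) :=
              one_div_le_one_div_of_le h2 h1
          _ ≤ c - c' := hN'.le
      have hev : ∀ᶠ k in atTop, Fseq (ψ k) (xs (ψ k)) ≤ (c : EReal) := by
        filter_upwards [e1, e2, e3] with k h1 h2 h3
        rw [hxs_sub]
        calc Fseq (ψ k) (y (ψ k)) ≤ b (ψ k) := hyle _
          _ = max (m (ψ k)) (((-(ψ k : ℝ) : ℝ)) : EReal)
              + (((1 / ((ψ k : ℝ) + 1) : ℝ)) : EReal) := rfl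
          _ ≤ (c' : EReal) + (((c - c' : ℝ)) : EReal) :=
              add_le_add (max_le h1.le h2) h3
          _ = (c : EReal) := by rw [← EReal.coe_add]; norm_num
      have hlim1 : liminf (fun k => Fseq (ψ k) (xs (ψ k))) atTop ≤ (c : EReal) :=
        liminf_le_of_frequently_le (hev.frequently)
      have hlim2 : liminf (fun n => Fseq n (xs n)) atTop ≤
          liminf (fun k => Fseq (ψ k) (xs (ψ k))) atTop :=
        myLiminfComp (fun n => Fseq n (xs n)) ψ (hψmono.tendsto_atTop)
      exact le_trans (le_trans (hliminf x xs hxs_tendsto) hlim2) hlim1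
    have hML : M ≤ L := le_trans (iInf_le _ x) hFlimx_le
    have hLM : L ≤ M := le_trans liminf_le_limsup hup
    have htendsto : Tendsto m atTop (nhds M) :=
      tendsto_of_liminf_eq_limsup (le_antisymm hLM hML)
        (le_antisymm hup (le_trans hML (liminf_le_limsup)))
    have hxmin : ∀ z : X, Flim x ≤ Flim z := fun z =>
      le_trans (le_trans hFlimx_le hLM) (iInf_le _ z)
    refine ⟨⟨x, hxmin⟩, htendsto, ?_⟩
    intro x' xs' Lval hx' hF' hm' z
    have hLvalM : Lval = M := tendsto_nhds_unique hm' htendsto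
    calc Flim x' ≤ liminf (fun n => Fseq n (xs' n)) atTop := hliminf x' xs' hx'
      _ = Lval := hF'.liminf_eq
      _ = M := hLvalM
      _ ≤ Flim z := iInf_le _ z
end
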